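/- Let M ≥ 2, r > 1, R = diag(r,1,…,1), F = 𝟙𝟙ᵀ (the all-ones M×M matrix), and Σ = R + F. If f = (f₁,…,f_M)ᵀ is an eigenvector of Σ corresponding to its largest eigenvalue, then f₂ = f₃ = ⋯ = f_M, and the largest eigenvalue equals q = (1/2)(M + r + 1 + √((M+r+1)² − 4(Mr+1))), with f₁/fᵢ = q − M for all i > 1. -/

import Mathlib

open Matrix

/-- For `Σ = diag(r,1,…,1) + 𝟙𝟙ᵀ` with `r > 1`, any top eigenvector `f` has equal
components `f₂ = ⋯ = f_M`, the largest eigenvalue is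
`q = (M + r + 1 + √((M+r+1)² − 4(Mr+1)))/2`, and `f₁ = (q − M) fᵢ` for `i > 1`. -/
theorem stmt6 (M : ℕ) (hM : 2 ≤ M) (r : ℝ) (hr : 1 < r)
    (f : Fin M → ℝ) (q : ℝ) (hf : f ≠ 0)
    (heig : (Matrix.diagonal (fun i : Fin M => if (i : ℕ) = 0 then r else 1) +
        Matrix.of fun _ _ : Fin M => (1 : ℝ)).mulVec f = q • f)
    (hmax : ∀ (μ : ℝ) (g : Fin M → ℝ), g ≠ 0 →
      (Matrix.diagonal (fun i : Fin M => if (i : ℕ) = 0 then r else 1) +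
        Matrix.of fun _ _ : Fin M => (1 : ℝ)).mulVec g = μ • g → μ ≤ q) :
    (∀ i j : Fin M, (i : ℕ) ≠ 0 → (j : ℕ) ≠ 0 → f i = f j) ∧
    q = (1 / 2) * ((M : ℝ) + r + 1 +
      Real.sqrt (((M : ℝ) + r + 1) ^ 2 - 4 * ((M : ℝ) * r + 1))) ∧
    ∀ i : Fin M, (i : ℕ) ≠ 0 → f ⟨0, by omega⟩ = (q - (M : ℝ)) * f i := by
  have hM' : (2 : ℝ) ≤ (M : ℝ) := by exact_mod_cast hM
  -- row formula for mulVec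
  have mv : ∀ (v : Fin M → ℝ) (i : Fin M),
      (Matrix.diagonal (fun i : Fin M => if (i : ℕ) = 0 then r else 1) +
        Matrix.of fun _ _ : Fin M => (1 : ℝ)).mulVec v i
      = (if (i : ℕ) = 0 then r else 1) * v i + ∑ j, v j := by
    intro v i
    simp [Matrix.mulVec, dotProduct, Matrix.add_apply, Matrix.diagonal_apply,
      add_mul, Finset.sum_add_distrib, ite_mul]
  set D : ℝ := ((M : ℝ) + r + 1) ^ 2 - 4 * ((M : ℝ) * r + 1) with hD
  have hDpos : ((M : ℝ) + 1 - r) ^ 2 < D := by rw [hD]; nlinarith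
  have hD0 : 0 ≤ D := le_trans (sq_nonneg _) hDpos.le
  set s : ℝ := Real.sqrt D with hs
  have hs2 : s ^ 2 = D := Real.sq_sqrt hD0
  have hs0 : 0 ≤ s := Real.sqrt_nonneg _
  have hsgt : (M : ℝ) + 1 - r < s := by nlinarith
  have hsgt' : r - (M : ℝ) - 1 < s := by nlinarith
  set Q : ℝ := (1 / 2) * ((M : ℝ) + r + 1 + s) with hQdef
  have hQquad : Q ^ 2 - ((M : ℝ) + r + 1) * Q + ((M : ℝ) * r + 1) = 0 := by
    rw [hQdef]; nlinarith
  have hQM : (M : ℝ) + 1 < Q := by rw [hQdef]; nlinarith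
  have hQr : r < Q := by rw [hQdef]; nlinarith
  set i0 : Fin M := ⟨0, by omega⟩ with hi0
  have hcond : ∀ j : Fin M, ((j : ℕ) = 0) ↔ (j = i0) := by
    intro j
    constructor
    · intro h; exact Fin.ext h
    · intro h; rw [h]
  -- the explicit top eigenvector
  have hQle : Q ≤ q := by
    apply hmax Q (fun j => if (j : ℕ) = 0 then Q - (M : ℝ) else 1)
    · intro h
      have := congrFun h ⟨1, by omega⟩
      simp only [Pi.zero_apply] at this
      rw [if_neg (by simp)] at this
      exact one_ne_zero this
    · funext i
      rw [mv]
      have hsum : (∑ j : Fin M, if (j : ℕ) = 0 then Q - (M : ℝ) else 1) = Q - 1 := by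
        have : ∀ j : Fin M, (if (j : ℕ) = 0 then Q - (M : ℝ) else (1:ℝ))
            = 1 + (if j = i0 then Q - (M : ℝ) - 1 else 0) := by
          intro j
          by_cases h : (j : ℕ) = 0
          · rw [if_pos h, if_pos ((hcond j).mp h)]; ring
          · rw [if_neg h, if_neg (fun hc => h ((hcond j).mpr hc))]; ring
        rw [Finset.sum_congr rfl (fun j _ => this j), Finset.sum_add_distrib,
          Finset.sum_const, Finset.sum_ite_eq' Finset.univ i0,
          if_pos (Finset.mem_univ i0), Finset.card_univ, Fintype.card_fin,
          nsmul_eq_mul, mul_one]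
        ring
      rw [hsum]
      simp only [Pi.smul_apply, smul_eq_mul]
      by_cases h : (i : ℕ) = 0
      · rw [if_pos h, if_pos h]; nlinarith
      · rw [if_neg h, if_neg h]; ring
  have hq1 : 1 < q := lt_of_lt_of_le (by linarith) hQle
  have hqr : r < q := lt_of_lt_of_le hQr hQle
  -- the eigen equations for f
  set S : ℝ := ∑ j, f j with hS
  have key : ∀ i : Fin M, (if (i : ℕ) = 0 then r else 1) * f i + S = q * f i := by
    intro i
    have h := congrFun heig i
    rw [mv] at h
    simpa using h
  have keyne : ∀ i : Fin M, (i : ℕ) ≠ 0 → (q - 1) * f i = S := by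
    intro i hi
    have := key i
    rw [if_neg hi] at this
    linarith
  have key0 : (q - r) * f i0 = S := by
    have := key i0
    rw [if_pos rfl] at this
    linarith
  -- equal components
  have heqc : ∀ i j : Fin M, (i : ℕ) ≠ 0 → (j : ℕ) ≠ 0 → f i = f j := by
    intro i j hi hj
    have h1 := keyne i hi
    have h2 := keyne j hj
    have : (q - 1) * f i = (q - 1) * f j := by rw [h1, h2]
    exact mul_left_cancel₀ (by linarith) this
  -- S ≠ 0
  have hSne : S ≠ 0 := by
    intro hS0
    apply hf
    funext i
    by_cases h : (i : ℕ) = 0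
    · have hi : i = i0 := (hcond i).mp h
      rw [hi]
      have := key0
      rw [hS0] at this
      have := mul_eq_zero.mp this
      rcases this with h' | h'
      · linarith
      · simpa using h'
    · have := keyne i h
      rw [hS0] at this
      have := mul_eq_zero.mp this
      rcases this with h' | h'
      · linarith
      · simpa using h'
  set i1 : Fin M := ⟨1, by omega⟩ with hi1
  have hi1ne : ((i1 : ℕ) : ℕ) ≠ 0 := by simp [hi1]
  have hf1ne : f i1 ≠ 0 := by
    intro h
    apply hSne
    rw [← keyne i1 hi1ne, h, mul_zero]
  -- compute S via equal components
  have hSval : S = (M : ℝ) * f i1 + (f i0 - f i1) := by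
    rw [hS]
    have : ∀ j : Fin M, f j = f i1 + (if j = i0 then f i0 - f i1 else 0) := by
      intro j
      by_cases h : (j : ℕ) = 0
      · rw [if_pos ((hcond j).mp h)]
        have : j = i0 := (hcond j).mp h
        rw [this]; ring
      · rw [if_neg (fun hc => h ((hcond j).mpr hc))]
        rw [heqc j i1 h hi1ne]; ring
    rw [Finset.sum_congr rfl (fun j _ => this j), Finset.sum_add_distrib,
      Finset.sum_const, Finset.sum_ite_eq' Finset.univ i0,
      if_pos (Finset.mem_univ i0), Finset.card_univ, Fintype.card_fin, nsmul_eq_mul]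
  -- f i0 = (q - M) f i1
  have hf0 : f i0 = (q - (M : ℝ)) * f i1 := by
    have h1 := keyne i1 hi1ne
    rw [hSval] at h1
    linear_combination -h1
  -- quadratic for q
  have hqquad : q ^ 2 - ((M : ℝ) + r + 1) * q + ((M : ℝ) * r + 1) = 0 := by
    have h0 := key0
    have h1 := keyne i1 hi1ne
    rw [hSval, hf0] at h0 h1
    have h3 : ((q - r) * (q - (M : ℝ)) - (q - 1)) * f i1 = 0 := by linear_combination h0 - h1
    have h4 : (q - r) * (q - (M : ℝ)) - (q - 1) = 0 :=
      (mul_eq_zero.mp h3).resolve_right hf1ne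
    linear_combination h4
  have hspos : 0 < s := Real.sqrt_pos.mpr (lt_of_le_of_lt (sq_nonneg _) hDpos)
  have hfac : (q - Q) * (q + Q - ((M : ℝ) + r + 1)) = 0 := by
    linear_combination hqquad - hQquad
  have hqQ : q = Q := by
    rcases mul_eq_zero.mp hfac with h' | h'
    · linarith
    · rw [hQdef] at h' hQle; linarith
  refine ⟨heqc, by rw [hqQ, hQdef], ?_⟩
  intro i hi
  have : f i = f i1 := heqc i i1 hi hi1ne
  rw [this]; exact hf0
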